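/- Suppose the configuration (J, K, D₁, D₂) is semi-slant with angle θ ∈ (0, π/2]. Then B(Kᗮ) = D₂, i.e. the image of the orthogonal complement of K under Z ↦ proj_K(JZ) is exactly D₂. -/

import Mathlib

open Submodule InnerProductGeometry RealInnerProductSpace

/-- If the configuration `(J, K, D₁, D₂)` is semi-slant with angle
`θ ∈ (0, π/2]`, then `B(Kᗮ) = D₂`: the image of `Kᗮ` under `Z ↦ proj_K (J Z)` is
exactly `D₂`. -/
theorem stmt_16 {V : Type*} [NormedAddCommGroup V] [InnerProductSpace ℝ V]
    [FiniteDimensional ℝ V]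
    (J : V →ₗ[ℝ] V) (hJiso : ∀ v : V, ‖J v‖ = ‖v‖) (hJ2 : ∀ v : V, J (J v) = -v)
    (K : Submodule ℝ V)
    (φ : K → K) (ω : K → Kᗮ) (B : Kᗮ → K)
    (hφ : ∀ X : K, φ X = orthogonalProjectionOnto K (J (X : V)))
    (hω : ∀ X : K, ω X = orthogonalProjectionOnto Kᗮ (J (X : V)))
    (hB : ∀ Z : Kᗮ, B Z = orthogonalProjectionOnto K (J (Z : V)))
    (D₁ D₂ : Submodule ℝ V) (hD₁K : D₁ ≤ K) (hJD₁ : D₁.map J = D₁)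
    (hD₂ : D₂ = D₁ᗮ ⊓ K)
    (θ : ℝ) (hθ : θ ∈ Set.Ioc 0 (Real.pi / 2))
    (hslant : ∀ X : V, X ∈ D₂ → X ≠ 0 →
      InnerProductGeometry.angle (J X) (orthogonalProjectionOnto D₂ (J X) : V) = θ) :
    {v : V | ∃ Z : Kᗮ, (B Z : V) = v} = {v : V | v ∈ D₂} := by
  classical
  have hJi : ∀ u v : V, ⟪J u, J v⟫ = ⟪u, v⟫ :=
    (LinearMap.norm_map_iff_inner_map_map J).mp hJiso
  have hJsk : ∀ u v : V, ⟪J u, v⟫ = -⟪u, J v⟫ := by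
    intro u v
    have := hJi u (J v)
    rw [hJ2] at this
    rw [← this, inner_neg_right, neg_neg]
  -- projection leaves inner products with elements of K unchanged
  have hproj : ∀ (v w : V), w ∈ K → ⟪(orthogonalProjectionOnto K v : V), w⟫ = ⟪v, w⟫ := by
    intro v w hw
    have h := starProjection_inner_eq_zero (K := K) v w hw
    rw [inner_sub_left, sub_eq_zero] at h
    exact h.symm
  have hD₂K : D₂ ≤ K := hD₂ ▸ inf_le_right
  have hD₂o : D₂ ≤ D₁ᗮ := hD₂ ▸ inf_le_left
  have hJD₁' : ∀ x ∈ D₁, J x ∈ D₁ := by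
    intro x hx
    rw [← hJD₁]; exact ⟨x, hx, rfl⟩
  -- the image of J on K⊥ (resp. D₂) projected to K lands in D₂
  have hmemD₂ : ∀ w : V, (∀ x ∈ D₁, ⟪w, J x⟫ = 0) →
      (orthogonalProjectionOnto K (J w) : V) ∈ D₂ := by
    intro w hw
    rw [hD₂, Submodule.mem_inf]
    refine ⟨?_, (orthogonalProjectionOnto K (J w)).2⟩
    rw [Submodule.mem_orthogonal]
    intro x hx
    rw [real_inner_comm, hproj _ _ (hD₁K hx), hJsk, hw x hx, neg_zero]
  have hBmem : ∀ Z : Kᗮ, (orthogonalProjectionOnto K (J (Z : V)) : V) ∈ D₂ := by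
    intro Z
    refine hmemD₂ _ fun x hx => ?_
    rw [real_inner_comm]
    exact Z.2 (J x) (hD₁K (hJD₁' x hx))
  have hφmem : ∀ X : V, X ∈ D₂ → (orthogonalProjectionOnto K (J X) : V) ∈ D₂ := by
    intro X hX
    refine hmemD₂ _ fun x hx => ?_
    rw [real_inner_comm]
    exact hD₂o hX (J x) (hJD₁' x hx)
  -- proj_{D₂} (J X) = proj_K (J X) for X ∈ D₂
  have hprojD₂ : ∀ X : V, X ∈ D₂ →
      (orthogonalProjectionOnto D₂ (J X) : V) = (orthogonalProjectionOnto K (J X) : V) := by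
    intro X hX
    refine eq_starProjection_of_mem_orthogonal (K := D₂) (hφmem X hX) ?_
    exact (Submodule.orthogonal_le hD₂K) (sub_starProjection_mem_orthogonal (K := K) (J X))
  -- norm of φ X
  have hnorm : ∀ X : V, X ∈ D₂ →
      ‖(orthogonalProjectionOnto K (J X) : V)‖ = Real.cos θ * ‖X‖ := by
    intro X hX
    by_cases hX0 : X = 0
    · simp [hX0]
    set p : V := (orthogonalProjectionOnto K (J X) : V) with hp
    have hip : ⟪J X, p⟫ = ‖p‖ ^ 2 := by
      rw [hp, ← hproj (J X) ((orthogonalProjectionOnto K (J X) : V))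
        (orthogonalProjectionOnto K (J X)).2, real_inner_self_eq_norm_sq]
    have hcos : Real.cos θ = ⟪J X, p⟫ / (‖J X‖ * ‖p‖) := by
      rw [← hslant X hX hX0, InnerProductGeometry.cos_angle, hprojD₂ X hX]
    rw [hip, hJiso] at hcos
    by_cases hp0 : p = 0
    · have : Real.cos θ = 0 := by simpa [hp0] using hcos
      simp [hp0, this]
    · have hpn : ‖p‖ ≠ 0 := norm_ne_zero_iff.mpr hp0
      have hXn : ‖X‖ ≠ 0 := norm_ne_zero_iff.mpr hX0
      rw [hcos, sq]
      field_simp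
  -- φ² = -cos² θ on D₂
  have hφφ : ∀ X : V, X ∈ D₂ →
      (orthogonalProjectionOnto K (J (orthogonalProjectionOnto K (J X) : V)) : V)
        = -((Real.cos θ) ^ 2) • X := by
    intro X hX
    set Y : V := (orthogonalProjectionOnto K (J X) : V) with hY
    have hYmem : Y ∈ D₂ := hφmem X hX
    set W : V := (orthogonalProjectionOnto K (J Y) : V) with hW
    have hWn : ‖W‖ = Real.cos θ * ‖Y‖ := hnorm Y hYmem
    have hYn : ‖Y‖ = Real.cos θ * ‖X‖ := hnorm X hX
    have hYK : Y ∈ K := by rw [hY]; exact (orthogonalProjectionOnto K (J X)).2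
    have hWX : ⟪W, X⟫ = -(‖Y‖ ^ 2) := by
      rw [hW, hproj _ _ (hD₂K hX), hJsk, real_inner_comm,
        ← hproj (J X) Y hYK, ← hY, real_inner_self_eq_norm_sq]
    have hzero : ‖W + (Real.cos θ ^ 2) • X‖ ^ 2 = 0 := by
      rw [norm_add_sq_real, real_inner_smul_right, hWX, norm_smul, Real.norm_eq_abs,
        abs_of_nonneg (sq_nonneg (Real.cos θ)), hWn, hYn]
      ring
    have : W + (Real.cos θ ^ 2) • X = 0 := by
      have := pow_eq_zero_iff (n := 2) (by norm_num) |>.mp hzero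
      exact norm_eq_zero.mp this
    have := eq_neg_of_add_eq_zero_left this
    rw [this, neg_smul]
  -- now prove set equality
  ext v
  simp only [Set.mem_setOf_eq]
  constructor
  · rintro ⟨Z, rfl⟩
    rw [hB]
    exact hBmem Z
  · intro hv
    have hs : Real.sin θ ≠ 0 := by
      refine Real.sin_pos_of_pos_of_lt_pi hθ.1 (lt_of_le_of_lt hθ.2 ?_) |>.ne'
      linarith [Real.pi_pos]
    set s : ℝ := Real.sin θ ^ 2 with hsdef
    have hs2 : s ≠ 0 := pow_ne_zero 2 hs
    -- the candidate preimage
    set z : V := J v - (orthogonalProjectionOnto K (J v) : V) with hz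
    have hzmem : z ∈ Kᗮ := sub_starProjection_mem_orthogonal (K := K) (J v)
    refine ⟨(-(1 / s)) • ⟨z, hzmem⟩, ?_⟩
    rw [hB]
    have hJz : J ((-(1 / s)) • z) = (-(1 / s)) • (-v - J (orthogonalProjectionOnto K (J v) : V)) := by
      rw [map_smul, hz, map_sub, hJ2]
    have hcalc : (orthogonalProjectionOnto K (J ((-(1 / s)) • z)) : V)
        = (-(1 / s)) • (-v - (-((Real.cos θ) ^ 2) • v)) := by
      rw [hJz, map_smul, map_sub]
      have h1 : (orthogonalProjectionOnto K (-v) : V) = -v := by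
        exact starProjection_eq_self_iff.mpr (Submodule.neg_mem K (hD₂K hv))
      have h2 := hφφ v hv
      push_cast
      rw [h1, h2]
    have hfin : (-(1 / s)) • (-v - (-((Real.cos θ) ^ 2) • v)) = v := by
      have hpyth : s = 1 - Real.cos θ ^ 2 := by
        rw [hsdef, Real.sin_sq]
      have hkey : -(1/s) * (-1 + Real.cos θ ^ 2) = 1 := by
        rw [hpyth] at hs2 ⊢
        field_simp
        ring
      calc (-(1 / s)) • (-v - (-((Real.cos θ) ^ 2) • v))
          = (-(1/s) * (-1 + Real.cos θ ^ 2)) • v := by module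
        _ = v := by rw [hkey, one_smul]
    have hcoe : ((((-(1 / s)) • (⟨z, hzmem⟩ : Kᗮ)) : Kᗮ) : V) = (-(1/s)) • z := rfl
    rw [hcoe, hcalc, hfin]
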